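/- For every g ∈ ℋ, the set 𝒮_g = {p ∈ 𝒫 : g ∈ 𝒢^p} is open and dense in the poset 𝒫. -/
import Mathlib


open Cardinal Filter Set

noncomputable section

/-- The index set: ordinals below an (infinite) cardinal `lam`. -/
abbrev Idx (lam : Cardinal) := {o : Ordinal // o < lam.ord}

/-- `G = ℚ^(λ)`, the group of finitely supported functions `λ → ℚ`. -/
abbrev G (lam : Cardinal) := Idx lam →₀ ℚ

/-- The circle group `𝕋 = ℝ/ℤ`. -/
abbrev CircleT := AddCircle (1 : ℝ)

/-- `χ_μ`. -/
def chi (lam : Cardinal) (μ : Idx lam) : G lam := Finsupp.single μ 1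

/-- An ultrafilter on `ω` is selective if every `f : ω → ω` is constant or injective
on some member of the ultrafilter. -/
def IsSelective (𝒰 : Ultrafilter ℕ) : Prop :=
  ∀ f : ℕ → ℕ, ∃ A ∈ 𝒰, Set.InjOn f A ∨ ∀ m ∈ A, ∀ n ∈ A, f m = f n

/-- `z` is the `𝒰`-limit of the sequence `x`. -/
def ULim {X : Type*} [TopologicalSpace X] (𝒰 : Ultrafilter ℕ) (x : ℕ → X) (z : X) : Prop :=
  ∀ A ∈ nhds z, {n | x n ∈ A} ∈ 𝒰

/-- `[g]_𝒰`, the class of `g` in the ultrapower `Ult_𝒰(G)` (= the germ of `g` at `𝒰`). -/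
def germ (lam : Cardinal) (𝒰 : Ultrafilter ℕ) (g : ℕ → G lam) :
    Filter.Germ (𝒰 : Filter ℕ) (G lam) := g

/-- The combined family `([g]_𝒰 : g ∈ H) ∪ ([χ⃗_μ]_𝒰 : μ ∈ λ)` in `Ult_𝒰(G)`. -/
def extFam (lam : Cardinal) (𝒰 : Ultrafilter ℕ) (H : Set (ℕ → G lam)) :
    H ⊕ Idx lam → Filter.Germ (𝒰 : Filter ℕ) (G lam) :=
  Sum.elim (fun g => germ lam 𝒰 g) (fun μ => germ lam 𝒰 (fun _ => chi lam μ))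

structure PCond (lam : Cardinal) (𝒰 : Ultrafilter ℕ) (H : Set (ℕ → G lam)) where
  E : Set (Idx lam)
  E_countable : E.Countable
  omega_subset : ∀ x : Idx lam, x.1 < Ordinal.omega0 → x ∈ E
  alpha : Ordinal
  alpha_lt : alpha < continuum.ord
  Gs : Set (ℕ → G lam)
  Gs_subset : Gs ⊆ H
  Gs_countable : Gs.Countable
  supp_mem : ∀ g ∈ Gs, ∀ n : ℕ, g n ∈ Finsupp.supported ℚ ℚ E
  xi : Gs → Idx lam
  xi_mem : ∀ g : Gs, xi g ∈ E ∧ (xi g).1 < continuum.ord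
  phi : ↥(Finsupp.supported ℚ ℚ E) →+ ({β : Ordinal // β < alpha} → CircleT)
  phi_ulim : ∀ g : Gs, ULim 𝒰 (fun n => phi ⟨g.1 n, supp_mem g.1 g.2 n⟩)
      (phi ⟨chi lam (xi g), Finsupp.single_mem_supported ℚ 1 (xi_mem g).1⟩)

structure PLe {lam : Cardinal} {𝒰 : Ultrafilter ℕ} {H : Set (ℕ → G lam)}
    (q p : PCond lam 𝒰 H) : Prop where
  E_sub : p.E ⊆ q.E
  alpha_le : p.alpha ≤ q.alpha
  Gs_sub : p.Gs ⊆ q.Gs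
  xi_eq : ∀ g : p.Gs, q.xi ⟨g.1, Gs_sub g.2⟩ = p.xi g
  phi_eq : ∀ a (ha : a ∈ Finsupp.supported ℚ ℚ p.E) (β : Ordinal) (hβ : β < p.alpha),
    q.phi ⟨a, Finsupp.supported_mono E_sub ha⟩ ⟨β, lt_of_lt_of_le hβ alpha_le⟩
      = p.phi ⟨a, ha⟩ ⟨β, hβ⟩

def PCompat {lam : Cardinal} {𝒰 : Ultrafilter ℕ} {H : Set (ℕ → G lam)}
    (p q : PCond lam 𝒰 H) : Prop := ∃ r, PLe r p ∧ PLe r q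

def IsOpenD {lam : Cardinal} {𝒰 : Ultrafilter ℕ} {H : Set (ℕ → G lam)}
    (D : Set (PCond lam 𝒰 H)) : Prop := ∀ p ∈ D, ∀ q, PLe q p → q ∈ D

def IsDenseD {lam : Cardinal} {𝒰 : Ultrafilter ℕ} {H : Set (ℕ → G lam)}
    (D : Set (PCond lam 𝒰 H)) : Prop := ∀ p, ∃ q ∈ D, PLe q p


section Aux

open scoped Classical

variable {lam : Cardinal} {𝒰 : Ultrafilter ℕ} {H : Set (ℕ → G lam)}

lemma ple_refl (p : PCond lam 𝒰 H) : PLe p p :=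
  ⟨subset_rfl, le_rfl, subset_rfl, fun _ => rfl, fun _ _ _ _ => rfl⟩

/-- Restriction of a finitely supported function to coordinates in `E`, as a hom. -/
noncomputable def restrictHom (E E' : Set (Idx lam)) :
    ↥(Finsupp.supported ℚ ℚ E') →+ ↥(Finsupp.supported ℚ ℚ E) where
  toFun a := ⟨Finsupp.filter (· ∈ E) a.1, by
    rw [Finsupp.mem_supported ℚ]
    intro x hx
    rw [Finset.mem_coe, Finsupp.support_filter, Finset.mem_filter] at hx
    exact hx.2⟩
  map_zero' := Subtype.ext (Finsupp.filter_zero _)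
  map_add' a b := Subtype.ext (by
    show Finsupp.filter _ (a.1 + b.1) = _
    rw [Finsupp.filter_add]
    rfl)

lemma restrictHom_of_mem {E E' : Set (Idx lam)} (a : G lam) (ha : a ∈ Finsupp.supported ℚ ℚ E)
    (ha' : a ∈ Finsupp.supported ℚ ℚ E') :
    restrictHom E E' ⟨a, ha'⟩ = ⟨a, ha⟩ := by
  apply Subtype.ext
  show Finsupp.filter (· ∈ E) a = a
  ext x
  rw [Finsupp.filter_apply]
  split_ifs with h
  · rfl
  · by_contra h0
    exact h ((Finsupp.mem_supported ℚ _).1 ha (Finsupp.mem_support_iff.2 fun h1 => h0 h1.symm))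

/-- Evaluation at the coordinate `ξ`, as a hom. -/
noncomputable def evalHom (E' : Set (Idx lam)) (ξ : Idx lam) :
    ↥(Finsupp.supported ℚ ℚ E') →+ ℚ :=
  (Finsupp.applyAddHom ξ).comp (Finsupp.supported ℚ ℚ E').subtype.toAddMonoidHom

/-- The hom `ℚ →+ 𝕋^α` sending `1` to the point with coordinates `r`. -/
noncomputable def smulHom {ι : Type*} (r : ι → ℝ) : ℚ →+ (ι → CircleT) where
  toFun c i := ((c • r i : ℝ) : CircleT)
  map_zero' := funext fun i => by
    show (((0 : ℚ) • r i : ℝ) : CircleT) = 0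
    rw [zero_smul, QuotientAddGroup.mk_zero]
  map_add' a b := funext fun i => by
    show (((a + b) • r i : ℝ) : CircleT) = ((a • r i : ℝ) : CircleT) + ((b • r i : ℝ) : CircleT)
    rw [add_smul, QuotientAddGroup.mk_add]

lemma dense_aux (hclam : continuum ≤ lam) (p : PCond lam 𝒰 H)
    (g : ℕ → G lam) (hg : g ∈ H) (hgp : g ∉ p.Gs) :
    ∃ q : PCond lam 𝒰 H, g ∈ q.Gs ∧ PLe q p := by
  classical
  set S : Set (Idx lam) := p.E ∪ ⋃ n, ↑(g n).support with hSdef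
  have hScnt : S.Countable :=
    p.E_countable.union (countable_iUnion fun n => (g n).support.countable_toSet)
  -- pick a fresh coordinate ξ
  obtain ⟨ξ, hξc, hξS⟩ : ∃ ξ : Idx lam, ξ.1 < continuum.ord ∧ ξ ∉ S := by
    by_contra hcon
    push_neg at hcon
    have hf : ∀ o : ↥(Iio continuum.ord),
        (⟨o.1, lt_of_lt_of_le o.2 (Cardinal.ord_le_ord.2 hclam)⟩ : Idx lam) ∈ S :=
      fun o => hcon _ o.2
    have hcnt : Countable ↥(Iio continuum.ord) := by
      haveI := hScnt.to_subtype
      exact Function.Injective.countable (f := fun o : ↥(Iio continuum.ord) =>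
        (⟨⟨o.1, lt_of_lt_of_le o.2 (Cardinal.ord_le_ord.2 hclam)⟩, hf o⟩ : ↥S))
        (fun o o' h => by
          apply Subtype.ext
          have := congrArg (fun t : ↥S => t.1.1) h
          exact this)
    have h1 : #(Iio continuum.ord) ≤ ℵ₀ := Cardinal.mk_le_aleph0_iff.2 hcnt
    rw [Ordinal.mk_Iio_ordinal, Cardinal.card_ord] at h1
    exact absurd h1 (not_le.2 (Cardinal.aleph0_lt_lift.2 Cardinal.aleph0_lt_continuum))
  have hξp : ξ ∉ p.E := fun h => hξS (Or.inl h)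
  have hξg : ∀ n, g n ξ = 0 := fun n => by
    by_contra h0
    exact hξS (Or.inr (mem_iUnion.2 ⟨n, Finset.mem_coe.2 (Finsupp.mem_support_iff.2 h0)⟩))
  set Eq : Set (Idx lam) := insert ξ S with hEqdef
  have hEp : p.E ⊆ Eq := fun x hx => mem_insert_of_mem _ (Or.inl hx)
  have hgnE : ∀ n, g n ∈ Finsupp.supported ℚ ℚ Eq := fun n =>
    (Finsupp.mem_supported ℚ _).2 fun x hx =>
      mem_insert_of_mem _ (Or.inr (mem_iUnion.2 ⟨n, hx⟩))
  have hξE : ξ ∈ Eq := mem_insert _ _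
  -- the 𝒰-limit z of the restricted sequence
  haveI : Fact ((0 : ℝ) < 1) := ⟨zero_lt_one⟩
  set x : ℕ → ({β : Ordinal // β < p.alpha} → CircleT) :=
    fun n => p.phi (restrictHom p.E Eq ⟨g n, hgnE n⟩) with hxdef
  set z := (𝒰.map x).lim with hzdef
  have hz : (𝒰.map x : Filter _) ≤ nhds z := Ultrafilter.le_nhds_lim _
  have hULxz : ULim 𝒰 x z := fun A hA => Filter.mem_map.1 (hz hA)
  -- the homomorphism ψ : ℚ →+ 𝕋^α with ψ 1 = z
  set r : {β : Ordinal // β < p.alpha} → ℝ := fun β => (z β).out with hrdef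
  have hψ1 : smulHom r 1 = z := funext fun β => by
    show ((1 • r β : ℝ) : CircleT) = z β
    rw [one_smul]
    exact QuotientAddGroup.out_eq' (z β)
  -- the extended homomorphism
  set φq : ↥(Finsupp.supported ℚ ℚ Eq) →+ ({β : Ordinal // β < p.alpha} → CircleT) :=
    (p.phi.comp (restrictHom p.E Eq)) + ((smulHom r).comp (evalHom Eq ξ)) with hφqdef
  have hφq_apply : ∀ a : ↥(Finsupp.supported ℚ ℚ Eq),
      φq a = p.phi (restrictHom p.E Eq a) + smulHom r (a.1 ξ) := fun a => rfl
  -- φq agrees with p.phi on elements supported on p.E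
  have lemA : ∀ (a : G lam) (ha : a ∈ Finsupp.supported ℚ ℚ p.E)
      (ha' : a ∈ Finsupp.supported ℚ ℚ Eq), φq ⟨a, ha'⟩ = p.phi ⟨a, ha⟩ := by
    intro a ha ha'
    have h0 : a ξ = 0 := by
      by_contra h0
      exact hξp ((Finsupp.mem_supported ℚ _).1 ha (Finsupp.mem_support_iff.2 h0))
    rw [hφq_apply, restrictHom_of_mem a ha ha']
    show p.phi ⟨a, ha⟩ + smulHom r (a ξ) = p.phi ⟨a, ha⟩
    rw [h0, map_zero, add_zero]
  -- φq sends χ_ξ to z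
  have hχmem : chi lam ξ ∈ Finsupp.supported ℚ ℚ Eq := Finsupp.single_mem_supported ℚ 1 hξE
  have lemχ : φq ⟨chi lam ξ, hχmem⟩ = z := by
    rw [hφq_apply]
    have h1 : restrictHom p.E Eq ⟨chi lam ξ, hχmem⟩ = 0 :=
      Subtype.ext (by
        show Finsupp.filter (· ∈ p.E) (Finsupp.single ξ (1 : ℚ)) = (0 : G lam)
        exact Finsupp.filter_single_of_neg _ hξp)
    rw [h1, map_zero, zero_add]
    show smulHom r ((Finsupp.single ξ (1 : ℚ)) ξ) = z
    rw [Finsupp.single_eq_same]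
    exact hψ1
  -- φq on the sequence g agrees with x
  have lemG : ∀ n (h' : g n ∈ Finsupp.supported ℚ ℚ Eq), φq ⟨g n, h'⟩ = x n := by
    intro n h'
    rw [hφq_apply]
    show p.phi (restrictHom p.E Eq ⟨g n, h'⟩) + smulHom r (g n ξ) = x n
    rw [hξg n, map_zero, add_zero, hxdef]
  -- transfer of ULim statements from p.phi to φq
  have key : ∀ (u : ℕ → G lam) (hu : ∀ n, u n ∈ Finsupp.supported ℚ ℚ p.E)
      (huq : ∀ n, u n ∈ Finsupp.supported ℚ ℚ Eq)
      (c : G lam) (hc : c ∈ Finsupp.supported ℚ ℚ p.E) (hcq : c ∈ Finsupp.supported ℚ ℚ Eq),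
      ULim 𝒰 (fun n => p.phi ⟨u n, hu n⟩) (p.phi ⟨c, hc⟩) →
      ULim 𝒰 (fun n => φq ⟨u n, huq n⟩) (φq ⟨c, hcq⟩) := by
    intro u hu huq c hc hcq hul
    have e1 : (fun n => φq ⟨u n, huq n⟩) = fun n => p.phi ⟨u n, hu n⟩ :=
      funext fun n => lemA _ (hu n) _
    rw [e1, lemA c hc hcq]
    exact hul
  -- the components of q
  have hsupp : ∀ h ∈ insert g p.Gs, ∀ n, h n ∈ Finsupp.supported ℚ ℚ Eq := by
    intro h hh n
    rcases (Set.mem_insert_iff.1 hh) with rfl | hh'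
    · exact hgnE n
    · exact Finsupp.supported_mono hEp (p.supp_mem h hh' n)
  let xiq : ↥(insert g p.Gs) → Idx lam :=
    fun h => if hh : h.1 ∈ p.Gs then p.xi ⟨h.1, hh⟩ else ξ
  have hximem : ∀ h : ↥(insert g p.Gs), xiq h ∈ Eq ∧ (xiq h).1 < continuum.ord := by
    intro h
    by_cases hh : h.1 ∈ p.Gs
    · have : xiq h = p.xi ⟨h.1, hh⟩ := dif_pos hh
      rw [this]
      exact ⟨hEp (p.xi_mem ⟨h.1, hh⟩).1, (p.xi_mem ⟨h.1, hh⟩).2⟩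
    · have : xiq h = ξ := dif_neg hh
      rw [this]
      exact ⟨hξE, hξc⟩
  refine ⟨⟨Eq, hScnt.insert ξ, fun y hy => hEp (p.omega_subset y hy), p.alpha, p.alpha_lt,
    insert g p.Gs, Set.insert_subset_iff.2 ⟨hg, p.Gs_subset⟩, p.Gs_countable.insert g,
    hsupp, xiq, hximem, φq, ?_⟩, Set.mem_insert g p.Gs, ?_, le_rfl, Set.subset_insert g p.Gs,
    ?_, ?_⟩
  · -- phi_ulim
    rintro ⟨h1, hh1⟩
    by_cases hh : h1 ∈ p.Gs
    · have hxi : xiq ⟨h1, hh1⟩ = p.xi ⟨h1, hh⟩ := dif_pos hh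
      have hc : chi lam (xiq ⟨h1, hh1⟩) ∈ Finsupp.supported ℚ ℚ p.E := by
        rw [hxi]
        exact Finsupp.single_mem_supported ℚ 1 (p.xi_mem ⟨h1, hh⟩).1
      refine key h1 (p.supp_mem h1 hh) _ _ hc _ ?_
      have e2 : (⟨chi lam (xiq ⟨h1, hh1⟩), hc⟩ : ↥(Finsupp.supported ℚ ℚ p.E)) =
          ⟨chi lam (p.xi ⟨h1, hh⟩), Finsupp.single_mem_supported ℚ 1 (p.xi_mem ⟨h1, hh⟩).1⟩ :=
        Subtype.ext (by show chi lam (xiq ⟨h1, hh1⟩) = chi lam (p.xi ⟨h1, hh⟩); rw [hxi])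
      rw [e2]
      exact p.phi_ulim ⟨h1, hh⟩
    · have hg1 : h1 = g := by
        rcases Set.mem_insert_iff.1 hh1 with h | h
        · exact h
        · exact absurd h hh
      subst hg1
      have hxi : xiq ⟨h1, hh1⟩ = ξ := dif_neg hh
      have e1 : (fun n => φq ⟨h1 n, hsupp h1 hh1 n⟩) = x :=
        funext fun n => lemG n _
      have e2 : φq ⟨chi lam (xiq ⟨h1, hh1⟩),
          Finsupp.single_mem_supported ℚ 1 (hximem ⟨h1, hh1⟩).1⟩ = z := by
        have e3 : (⟨chi lam (xiq ⟨h1, hh1⟩),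
            Finsupp.single_mem_supported ℚ 1 (hximem ⟨h1, hh1⟩).1⟩ :
            ↥(Finsupp.supported ℚ ℚ Eq)) = ⟨chi lam ξ, hχmem⟩ :=
          Subtype.ext (by show chi lam (xiq ⟨h1, hh1⟩) = chi lam ξ; rw [hxi])
        rw [e3]
        exact lemχ
      rw [e1, e2]
      exact hULxz
  · -- E_sub
    exact hEp
  · -- xi_eq
    intro h
    exact dif_pos h.2
  · -- phi_eq
    intro a ha β hβ
    exact congrFun (lemA a ha (Finsupp.supported_mono hEp ha)) ⟨β, hβ⟩

end Aux

/-- For each `g ∈ ℋ`, the set `𝒮_g = {p ∈ 𝒫 : g ∈ 𝒢^p}` is open and dense in `𝒫`. -/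
theorem statement8 (lam : Cardinal) (hclam : Cardinal.continuum ≤ lam)
    (𝒰 : Ultrafilter ℕ) (hsel : IsSelective 𝒰) (H : Set (ℕ → G lam))
    (hH : LinearIndependent ℚ (extFam lam 𝒰 H))
    (g : ℕ → G lam) (hg : g ∈ H) :
    IsOpenD {p : PCond lam 𝒰 H | g ∈ p.Gs} ∧
    IsDenseD {p : PCond lam 𝒰 H | g ∈ p.Gs} := by
  constructor
  · intro p hp q hq
    exact hq.Gs_sub hp
  · intro p
    by_cases hgp : g ∈ p.Gs
    · exact ⟨p, hgp, ple_refl p⟩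
    · obtain ⟨q, hq1, hq2⟩ := dense_aux hclam p g hg hgp
      exact ⟨q, hq1, hq2⟩
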